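/- Let n ≥ 1, let f : ℝⁿ → [0,∞) be upper semicontinuous, and let t ≥ 0. Then for every s > 0, {x ∈ ℝⁿ : sup_{z ∈ tB} f(x − z) ≥ s} = {x : f(x) ≥ s} + tB (Minkowski sum, empty when {f ≥ s} is empty). Consequently, by the layer-cake formula, ∫_{ℝⁿ} sup_{z ∈ tB} f(x − z) dx = ∫₀^∞ vol({f ≥ s} + tB) ds. -/

import Mathlib

open MeasureTheory Filter Set Metric
open scoped Topology ENNReal Pointwise

noncomputable section

abbrev Euc (n : ℕ) := EuclideanSpace ℝ (Fin n)

/-- An upper semicontinuous real function attains its maximum on a nonempty compact set. -/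
lemma usc_exists_max {E : Type*} [TopologicalSpace E] {f : E → ℝ}
    (hf : UpperSemicontinuous f) {K : Set E} (hK : IsCompact K) (hne : K.Nonempty) :
    ∃ z₀ ∈ K, ∀ z ∈ K, f z ≤ f z₀ := by
  by_contra h
  push_neg at h
  have hcov : K ⊆ ⋃ w ∈ K, {z | f z < f w} := by
    intro z hz
    obtain ⟨w, hw, hlt⟩ := h z hz
    exact mem_biUnion hw hlt
  obtain ⟨T, hTK, hTfin, hcov'⟩ := hK.elim_finite_subcover_image
    (fun w _ => hf.isOpen_preimage (f w)) hcov
  obtain ⟨z, hz⟩ := hne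
  have hTne : T.Nonempty := by
    rcases mem_iUnion₂.1 (hcov' hz) with ⟨w, hw, _⟩
    exact ⟨w, hw⟩
  obtain ⟨w₀, hw₀T, hw₀max⟩ := Set.exists_max_image T f hTfin hTne
  rcases mem_iUnion₂.1 (hcov' (hTK hw₀T)) with ⟨w, hw, hlt⟩
  exact absurd (hw₀max w hw) (not_le.2 hlt)

theorem stmt5 {n : ℕ} (hn : 1 ≤ n) (f : Euc n → ℝ) (hf0 : ∀ x, 0 ≤ f x)
    (husc : UpperSemicontinuous f) (t : ℝ) (ht : 0 ≤ t) :
    (∀ s : ℝ, 0 < s →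
      {x : Euc n | s ≤ ⨆ z ∈ t • closedBall (0 : Euc n) 1, f (x - z)}
        = {x | s ≤ f x} + t • closedBall (0 : Euc n) 1) ∧
    ∫⁻ x : Euc n, ENNReal.ofReal (⨆ z ∈ t • closedBall (0 : Euc n) 1, f (x - z))
      = ∫⁻ s in Ioi (0 : ℝ), volume ({x | s ≤ f x} + t • closedBall (0 : Euc n) 1) := by
  set K : Set (Euc n) := t • closedBall (0 : Euc n) 1 with hKdef
  have hKball : K = closedBall (0 : Euc n) t := by
    rw [hKdef, smul_unitClosedBall, Real.norm_of_nonneg ht]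
  have hKcomp : IsCompact K := by
    rw [hKball]; exact isCompact_closedBall _ _
  have h0K : (0 : Euc n) ∈ K := by
    rw [hKball]; exact mem_closedBall_self ht
  have hKne : K.Nonempty := ⟨0, h0K⟩
  set g : Euc n → ℝ := fun x => ⨆ z ∈ K, f (x - z) with hgdef
  -- the sup is attained
  have key : ∀ x : Euc n, ∃ z₀ ∈ K, (∀ z ∈ K, f (x - z) ≤ f (x - z₀)) ∧ g x = f (x - z₀) := by
    intro x
    obtain ⟨z₀, hz₀K, hmax⟩ := usc_exists_max
      (UpperSemicontinuous.comp husc (by fun_prop : Continuous fun z : Euc n => x - z)) hKcomp hKne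
    refine ⟨z₀, hz₀K, hmax, le_antisymm ?_ ?_⟩
    · exact Real.iSup_le (fun z => Real.iSup_le (fun hz => hmax z hz) (hf0 _)) (hf0 _)
    · have hbdd : BddAbove (Set.range fun z : Euc n => ⨆ _ : z ∈ K, f (x - z)) := by
        refine ⟨f (x - z₀), ?_⟩
        rintro _ ⟨z, rfl⟩
        exact Real.iSup_le (fun hz => hmax z hz) (hf0 _)
      have h1 : (⨆ _ : z₀ ∈ K, f (x - z₀)) = f (x - z₀) := ciSup_pos hz₀K
      have h2 : (⨆ _ : z₀ ∈ K, f (x - z₀)) ≤ g x := le_ciSup hbdd z₀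
      exact h1 ▸ h2
  have hgnn : ∀ x, 0 ≤ g x := fun x => by
    obtain ⟨z₀, _, _, heq⟩ := key x
    rw [heq]; exact hf0 _
  have hgf : ∀ x, f x ≤ g x := by
    intro x
    obtain ⟨z₀, _, hmax, heq⟩ := key x
    rw [heq]
    simpa using hmax 0 h0K
  -- part 1
  have part1 : ∀ s : ℝ, 0 < s → {x : Euc n | s ≤ g x} = {x | s ≤ f x} + K := by
    intro s _
    ext x
    constructor
    · intro hx
      obtain ⟨z₀, hz₀K, _, heq⟩ := key x
      have : s ≤ f (x - z₀) := heq ▸ hx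
      exact ⟨x - z₀, this, z₀, hz₀K, by simp⟩
    · rintro ⟨y, hy, z, hzK, rfl⟩
      obtain ⟨z₀, _, hmax, heq⟩ := key (y + z)
      have : f (y + z - z) ≤ f (y + z - z₀) := hmax z hzK
      simp only [add_sub_cancel_right] at this
      show s ≤ g (y + z)
      rw [heq]
      exact hy.trans this
  refine ⟨part1, ?_⟩
  -- measurability of g
  have hlevel : ∀ s : ℝ, 0 < s → IsClosed ({x : Euc n | s ≤ f x} + K) := by
    intro s _
    exact IsClosed.add_right_of_isCompact (husc.isClosed_preimage s) hKcomp
  have hgmeas : Measurable g := by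
    apply measurable_of_Ici
    intro s
    rcases le_or_gt s 0 with hs | hs
    · have : g ⁻¹' Ici s = Set.univ := by
        ext x; simp only [mem_preimage, mem_Ici, mem_univ, iff_true]
        exact hs.trans (hgnn x)
      rw [this]; exact MeasurableSet.univ
    · have : g ⁻¹' Ici s = {x | s ≤ f x} + K := part1 s hs
      rw [this]; exact (hlevel s hs).measurableSet
  have := lintegral_eq_lintegral_meas_le (volume : Measure (Euc n))
    (Filter.Eventually.of_forall hgnn) hgmeas.aemeasurable
  rw [show (fun x : Euc n => ENNReal.ofReal (⨆ z ∈ K, f (x - z)))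
      = fun x => ENNReal.ofReal (g x) from rfl] at *
  rw [this]
  refine setLIntegral_congr_fun measurableSet_Ioi ?_
  intro s hs
  dsimp only
  rw [show {a : Euc n | s ≤ g a} = {x | s ≤ f x} + K from part1 s hs]

end
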